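/- If ρ is a separable bipartite density matrix on ℂ^n ⊗ ℂ^m, i.e., ρ = Σ_i p_i |α_i⟩⟨α_i| ⊗ |β_i⟩⟨β_i| with p_i ≥ 0, then the partial transpose (1⊗T)(ρ) is positive semidefinite. -/

import Mathlib

open scoped BigOperators ComplexOrder

def partialTranspose {n m : ℕ} (M : Matrix (Fin n × Fin m) (Fin n × Fin m) ℂ) :
    Matrix (Fin n × Fin m) (Fin n × Fin m) ℂ :=
  Matrix.of fun p q => M (p.1, q.2) (q.1, p.2)

lemma posSemidef_sum {k : Type*} [Fintype k] {N : ℕ}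
    (f : Fin N → Matrix k k ℂ) (h : ∀ i, (f i).PosSemidef) :
    (∑ i, f i).PosSemidef := by
  classical
  induction (Finset.univ : Finset (Fin N)) using Finset.induction with
  | empty => simp [Matrix.PosSemidef.zero]
  | insert _ _ hx ih => simpa [Finset.sum_insert hx] using (h _).add ih

lemma posSemidef_vecMulVec {k : Type*} [Fintype k] [DecidableEq k] (v : k → ℂ) :
    (Matrix.vecMulVec v (star v)).PosSemidef := by
  rw [Matrix.vecMulVec_eq (ι := Unit), ← Matrix.conjTranspose_replicateCol]
  exact Matrix.posSemidef_self_mul_conjTranspose _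

theorem stmt_2 (n m N : ℕ) (p : Fin N → ℝ) (hp : ∀ i, 0 ≤ p i)
    (α : Fin N → Fin n → ℂ) (β : Fin N → Fin m → ℂ)
    (ρ : Matrix (Fin n × Fin m) (Fin n × Fin m) ℂ)
    (hρ : ρ = ∑ i : Fin N, (p i : ℂ) • Matrix.of (fun x y : Fin n × Fin m =>
        (α i x.1 * β i x.2) * star (α i y.1 * β i y.2))) :
    (partialTranspose ρ).PosSemidef := by
  have key : partialTranspose ρ = ∑ i : Fin N,
      Matrix.vecMulVec
        (fun x : Fin n × Fin m => (Real.sqrt (p i) : ℂ) * α i x.1 * star (β i x.2))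
        (star fun x : Fin n × Fin m => (Real.sqrt (p i) : ℂ) * α i x.1 * star (β i x.2)) := by
    ext x y
    simp only [partialTranspose, hρ, Matrix.sum_apply, Matrix.of_apply,
      Matrix.smul_apply, Matrix.vecMulVec_apply, Pi.star_apply, smul_eq_mul]
    refine Finset.sum_congr rfl fun i _ => ?_
    have hpi : ((Real.sqrt (p i) : ℂ)) * ((starRingEnd ℂ) (Real.sqrt (p i) : ℂ)) = (p i : ℂ) := by
      rw [Complex.conj_ofReal, ← Complex.ofReal_mul, Real.mul_self_sqrt (hp i)]
    simp only [star_mul', starRingEnd_apply, star_star]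
    rw [starRingEnd_apply] at hpi
    ring_nf
    rw [mul_assoc (α i x.1 * β i y.2 * star (α i y.1) * star (β i x.2)), hpi]
    ring
  rw [key]
  exact posSemidef_sum _ fun i => posSemidef_vecMulVec _
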